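/- Bochnak–Łojasiewicz consequence: if f is a real-analytic germ at 0 ∈ ℝⁿ with f(0) = 0 and X is a real-analytic set germ with vanishing ideal I_X, then the real critical set S_f = {x : ∇f(x) = 0} contains X if and only if f belongs to the primitive ideal ∫I_X = {g ∈ I_X : ∂g/∂x_j ∈ I_X for all j}. -/
import Mathlib


open Filter

/-- Bochnak–Łojasiewicz consequence: for a real-analytic germ `f` at `0` with `f 0 = 0`
and a real-analytic set germ `X`, the critical set `S_f = {x | ∇f x = 0}` contains `X`
(as germs) iff `f` belongs to the primitive ideal `∫I_X`, i.e. `f` and all its first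
partial derivatives vanish on `X` near `0`.  The Bochnak–Łojasiewicz inequality
`|f x| ≤ C ‖x‖ ‖∇f x‖` is assumed. -/
theorem stmt_12 (n : ℕ) (f : EuclideanSpace ℝ (Fin n) → ℝ)
    (hf : AnalyticAt ℝ f 0) (hf0 : f 0 = 0)
    (X : Set (EuclideanSpace ℝ (Fin n)))
    (hX : ∃ (p : ℕ) (ψ : Fin p → EuclideanSpace ℝ (Fin n) → ℝ),
      (∀ i, AnalyticAt ℝ (ψ i) 0) ∧
      ∀ᶠ x in nhds (0 : EuclideanSpace ℝ (Fin n)), (x ∈ X ↔ ∀ i, ψ i x = 0))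
    (hBL : ∃ C : ℝ, 0 < C ∧ ∀ᶠ x in nhds (0 : EuclideanSpace ℝ (Fin n)),
      |f x| ≤ C * ‖x‖ * ‖fderiv ℝ f x‖) :
    (∀ᶠ x in nhds (0 : EuclideanSpace ℝ (Fin n)), x ∈ X → fderiv ℝ f x = 0) ↔
      (∀ᶠ x in nhds (0 : EuclideanSpace ℝ (Fin n)), x ∈ X → f x = 0 ∧ fderiv ℝ f x = 0) := by
  obtain ⟨C, hC, hbl⟩ := hBL
  constructor
  · intro h
    filter_upwards [h, hbl] with x hx hb hxX
    refine ⟨?_, hx hxX⟩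
    have := hb
    rw [hx hxX] at this
    simp at this
    exact this
  · intro h
    filter_upwards [h] with x hx hxX
    exact (hx hxX).2
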